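/- Let (Y_t) be the continuous-time random walk on ℤ with up-rate c⁺(y) = a(1-ρ(y+1))^N and down-rate c⁻(y) = b(1-ρ(y-1))^N, ρ(y) = (p/q)^y/(1+(p/q)^y), 0<p<q, and suppose a/b > (p/q)^N. Then the number Z = ∑_{y∈ℤ} (a/b)^y (1+(p/q)^y)^{-N} is finite and m(y) = Z^{-1}(a/b)^y(1+(p/q)^y)^{-N} is a stationary distribution: ∑_y m(y) Q(y,z) = 0 for all z ∈ ℤ, where Q is the rate matrix Q(y,y+1)=c⁺(y), Q(y,y-1)=c⁻(y), Q(y,y)=-(c⁺(y)+c⁻(y)). -/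

import Mathlib

/-- for the rod's limiting birth-death chain on `ℤ` with rates
`c⁺(y) = a(1-ρ(y+1))^N`, `c⁻(y) = b(1-ρ(y-1))^N`, `ρ(y) = (p/q)^y/(1+(p/q)^y)`,
`0 < p < q`, and `a/b > (p/q)^N` (with the paper's standing assumption
`a/b < 1`), the sum `Z = ∑_{y∈ℤ} (a/b)^y (1+(p/q)^y)^{-N}` is finite and
`m(y) = Z⁻¹(a/b)^y(1+(p/q)^y)^{-N}` is a stationary distribution:
`m(z-1)c⁺(z-1) + m(z+1)c⁻(z+1) = m(z)(c⁺(z)+c⁻(z))` for every `z`. -/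
theorem rod_stationary_distribution
    (a b p q : ℝ) (N : ℕ) (ha : 0 < a) (hb : 0 < b)
    (hp : 0 < p) (hpq : p < q)
    (hcond : (p / q) ^ N < a / b) (hab : a / b < 1)
    (ρ cplus cminus : ℤ → ℝ)
    (hρ : ∀ y : ℤ, ρ y = (p / q) ^ y / (1 + (p / q) ^ y))
    (hcp : ∀ y : ℤ, cplus y = a * (1 - ρ (y + 1)) ^ N)
    (hcm : ∀ y : ℤ, cminus y = b * (1 - ρ (y - 1)) ^ N)
    (Z : ℝ) (hZ : Z = ∑' y : ℤ, (a / b) ^ y / (1 + (p / q) ^ y) ^ N)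
    (m : ℤ → ℝ) (hm : ∀ y : ℤ, m y = ((a / b) ^ y / (1 + (p / q) ^ y) ^ N) / Z) :
    Summable (fun y : ℤ => (a / b) ^ y / (1 + (p / q) ^ y) ^ N)
    ∧ ∀ z : ℤ, m (z - 1) * cplus (z - 1) + m (z + 1) * cminus (z + 1)
        = m z * (cplus z + cminus z) := by
  set r : ℝ := p / q with hr
  set s : ℝ := a / b with hs
  have hq : 0 < q := hp.trans hpq
  have hr0 : 0 < r := div_pos hp hq
  have hr1 : r < 1 := (div_lt_one hq).mpr hpq
  have hs0 : 0 < s := div_pos ha hb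
  have hrz : ∀ y : ℤ, (0:ℝ) < r ^ y := fun y => zpow_pos hr0 y
  have hden : ∀ y : ℤ, (0:ℝ) < 1 + r ^ y := fun y => by positivity
  have hdenN : ∀ y : ℤ, (0:ℝ) < (1 + r ^ y) ^ N := fun y => pow_pos (hden y) N
  -- summability
  have hsum : Summable (fun y : ℤ => s ^ y / (1 + r ^ y) ^ N) := by
    apply Summable.of_nat_of_neg
    · apply Summable.of_nonneg_of_le (fun n => by positivity)
        (fun n => ?_) (summable_geometric_of_lt_one hs0.le hab)
      have h1 : (1:ℝ) ≤ (1 + r ^ (n:ℤ)) ^ N :=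
        one_le_pow₀ (by nlinarith [hrz (n:ℤ)])
      calc s ^ (n:ℤ) / (1 + r ^ (n:ℤ)) ^ N ≤ s ^ (n:ℤ) / 1 := by
            apply div_le_div_of_nonneg_left (zpow_pos hs0 _).le one_pos h1
        _ = s ^ n := by rw [div_one, zpow_natCast]
    · have ht0 : 0 ≤ r ^ N / s := by positivity
      have ht1 : r ^ N / s < 1 := (div_lt_one hs0).mpr hcond
      apply Summable.of_nonneg_of_le (fun n => by positivity)
        (fun n => ?_) (summable_geometric_of_lt_one ht0 ht1)
      have key : (r ^ N / s) ^ n = s ^ (-(n:ℤ)) / (r ^ (-(n:ℤ))) ^ N := by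
        rw [zpow_neg, zpow_neg, zpow_natCast, zpow_natCast, inv_pow]
        rw [div_pow, ← pow_mul, div_eq_mul_inv, div_eq_mul_inv, inv_inv]
        ring
      rw [key]
      apply div_le_div_of_nonneg_left (zpow_pos hs0 _).le (pow_pos (hrz _) N)
      exact pow_le_pow_left₀ (hrz _).le (by nlinarith [hrz (-(n:ℤ))]) N
  refine ⟨hsum, ?_⟩
  -- detailed balance
  have hone : ∀ y : ℤ, 1 - ρ y = 1 / (1 + r ^ y) := by
    intro y
    rw [hρ y]
    field_simp
    ring
  have key : ∀ z : ℤ, (s ^ (z - 1) / (1 + r ^ (z - 1)) ^ N) * cplus (z - 1)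
      = (s ^ z / (1 + r ^ z) ^ N) * cminus z := by
    intro z
    rw [hcp, hcm, hone, hone]
    have h1 : z - 1 + 1 = z := by ring
    rw [h1]
    have h2 : s ^ (z - 1) = s ^ z / s := by
      rw [zpow_sub₀ hs0.ne', zpow_one]
    rw [h2, hs]
    field_simp
    ring
    simp only [inv_pow]
    rw [inv_mul_cancel₀ (pow_ne_zero _ (hden _).ne'), inv_mul_cancel₀ (pow_ne_zero _ (hden _).ne')]
  have hdb1 : ∀ z : ℤ, m (z - 1) * cplus (z - 1) = m z * cminus z := by
    intro z
    have e1 : m (z - 1) * cplus (z - 1)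
        = (s ^ (z - 1) / (1 + r ^ (z - 1)) ^ N * cplus (z - 1)) / Z := by
      rw [hm]; ring
    have e2 : m z * cminus z = (s ^ z / (1 + r ^ z) ^ N * cminus z) / Z := by
      rw [hm]; ring
    rw [e1, e2, key z]
  have hdb2 : ∀ z : ℤ, m (z + 1) * cminus (z + 1) = m z * cplus z := by
    intro z
    have := hdb1 (z + 1)
    simp only [add_sub_cancel_right] at this
    linarith [this]
  intro z
  rw [hdb1 z, hdb2 z]
  ring
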